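/- Let S be an additively reduced semidomain and G a linearly ordered torsion-free abelian group. If f = ∑_{i=0}^n s_i x^{g_i} ∈ S[G] with g_0 > ⋯ > g_n, all s_i nonzero, has more than three terms and 2g_1 ≤ g_0 + g_n, then f is monolithic. -/

import Mathlib

/-- Witness that `S` is a semidomain: an injective semiring hom into an integral domain. -/
structure SemidomainWitness (S : Type*) [CommSemiring S] where
  D : Type
  [commRing : CommRing D]
  [isDomain : IsDomain D]
  emb : S →+* D
  inj : Function.Injective emb

/-- `S` is a semidomain, i.e. (isomorphic to) a subsemiring of an integral domain. -/
def IsSemidomain (S : Type*) [CommSemiring S] : Prop := Nonempty (SemidomainWitness S)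

/-- `S` is additively reduced: `0` is the only additively invertible element. -/
def AddReduced (S : Type*) [AddZeroClass S] : Prop := ∀ a b : S, a + b = 0 → a = 0

/-- `s` is an atom of the additive monoid `(S, +)` (for `S` additively reduced):
it is nonzero and cannot be written as a sum of two nonzero elements. -/
def IsAddAtom {S : Type*} [AddZeroClass S] (s : S) : Prop :=
  s ≠ 0 ∧ ∀ a b : S, s = a + b → a = 0 ∨ b = 0

/-- `S` is additively Furstenberg: every nonzero element is divisible in `(S, +)`
by an additive atom. -/
def AddFurstenberg (S : Type*) [AddZeroClass S] : Prop :=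
  ∀ s : S, s ≠ 0 → ∃ a t : S, IsAddAtom a ∧ s = a + t


section GroupAlg
variable {S : Type*} [CommSemiring S] {G : Type*} [AddCommGroup G]

/-- A monomial `s·x^g` in the group semidomain `S[G]`. -/
def IsMonomial (f : AddMonoidAlgebra S G) : Prop :=
  ∃ (g : G) (s : S), f = AddMonoidAlgebra.single g s

/-- `f` is monolithic: every factorization of `f` in `S[G]` has a monomial factor. -/
def Monolithic (f : AddMonoidAlgebra S G) : Prop :=
  f ≠ 0 ∧ ∀ p q : AddMonoidAlgebra S G, f = p * q → IsMonomial p ∨ IsMonomial q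

end GroupAlg

private lemma addReduced_sum_eq_zero {S : Type*} [AddCommMonoid S] (hred : AddReduced S)
    {ι : Type*} {t : Finset ι} {F : ι → S} (h : ∑ i ∈ t, F i = 0) : ∀ i ∈ t, F i = 0 := by
  induction t using Finset.cons_induction with
  | empty => simp
  | cons a t ha ih =>
    rw [Finset.sum_cons] at h
    have ha0 : F a = 0 := hred _ _ h
    have ht0 : ∑ i ∈ t, F i = 0 := by rwa [ha0, zero_add] at h
    intro i hi
    rcases Finset.mem_cons.mp hi with rfl | hi
    · exact ha0
    · exact ih ht0 i hi

set_option maxHeartbeats 1000000 in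
/-- If `f = ∑_{i=0}^n s_i x^{g_i}` with `g_0 > ⋯ > g_n`, all `s_i ≠ 0`, more than three
terms, and `2g_1 ≤ g_0 + g_n`, then `f` is monolithic. -/
theorem monolithic_of_two_smul_snd_le
    {S : Type*} [CommSemiring S] {G : Type*} [AddCommGroup G] [LinearOrder G] [IsOrderedAddMonoid G]
    (hS : IsSemidomain S) (hred : AddReduced S)
    (n : ℕ) (hn : 3 ≤ n) (s : Fin (n + 1) → S) (g : Fin (n + 1) → G)
    (hs : ∀ i, s i ≠ 0) (hg : StrictAnti g)
    (hgap : 2 • g ⟨1, by omega⟩ ≤ g ⟨0, by omega⟩ + g ⟨n, by omega⟩)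
    (f : AddMonoidAlgebra S G)
    (hf : f = ∑ i, AddMonoidAlgebra.single (g i) (s i)) :
    Monolithic f := by
  classical
  obtain ⟨W⟩ := hS
  letI := W.commRing
  letI := W.isDomain
  have hmul : ∀ a b : S, a ≠ 0 → b ≠ 0 → a * b ≠ 0 := by
    intro a b ha hb hab
    have h0 : W.emb a * W.emb b = 0 := by rw [← map_mul, hab, map_zero]
    have hea : W.emb a ≠ 0 := fun h => ha (W.inj (by rw [h, map_zero]))
    have heb : W.emb b ≠ 0 := fun h => hb (W.inj (by rw [h, map_zero]))
    exact (mul_ne_zero hea heb) h0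
  set i0 : Fin (n + 1) := ⟨0, by omega⟩ with hi0
  set i1 : Fin (n + 1) := ⟨1, by omega⟩ with hi1
  set i2 : Fin (n + 1) := ⟨2, by omega⟩ with hi2
  set iN : Fin (n + 1) := ⟨n, by omega⟩ with hiN
  have hfapp : ∀ i, f.coeff (g i) = s i := by
    intro i
    rw [hf, AddMonoidAlgebra.coeff_sum, Finsupp.finset_sum_apply]
    rw [Finset.sum_eq_single i]
    · exact Finsupp.single_eq_same
    · intro j _ hj
      exact Finsupp.single_eq_of_ne' (fun h => hj (hg.injective h))
    · simp
  have hsupp : ∀ x, x ∈ f.coeff.support ↔ ∃ i, g i = x := by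
    intro x
    constructor
    · intro hx
      by_contra hno
      push_neg at hno
      apply Finsupp.mem_support_iff.mp hx
      rw [hf, AddMonoidAlgebra.coeff_sum, Finsupp.finset_sum_apply]
      exact Finset.sum_eq_zero fun j _ => Finsupp.single_eq_of_ne' (hno j)
    · rintro ⟨i, rfl⟩
      rw [Finsupp.mem_support_iff, hfapp]
      exact hs i
  constructor
  · intro h0
    apply hs i0
    rw [← hfapp i0, h0]
    rfl
  intro p q hpq
  by_contra hcon
  push_neg at hcon
  obtain ⟨hpm, hqm⟩ := hcon
  have hsmall : ∀ r : AddMonoidAlgebra S G, r.coeff.support.card ≤ 1 → IsMonomial r := by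
    intro r hr
    rcases Nat.le_one_iff_eq_zero_or_eq_one.mp hr with h | h
    · refine ⟨0, 0, ?_⟩
      rw [AddMonoidAlgebra.coeff_eq_zero.mp (Finsupp.support_eq_empty.mp (Finset.card_eq_zero.mp h))]
      exact (AddMonoidAlgebra.single_zero 0).symm
    · obtain ⟨a, _, hra⟩ := Finsupp.card_support_eq_one.mp h
      exact ⟨a, r.coeff a, AddMonoidAlgebra.coeff_injective hra⟩
  have hp2 : 1 < p.coeff.support.card := by
    by_contra h
    exact hpm (hsmall p (by omega))
  have hq2 : 1 < q.coeff.support.card := by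
    by_contra h
    exact hqm (hsmall q (by omega))
  have hpne : p.coeff.support.Nonempty := Finset.card_pos.mp (by omega)
  have hqne : q.coeff.support.Nonempty := Finset.card_pos.mp (by omega)
  obtain ⟨a0, ha0m, ha0max⟩ : ∃ a ∈ p.coeff.support, ∀ x ∈ p.coeff.support, x ≤ a :=
    ⟨_, p.coeff.support.max'_mem hpne, fun x hx => Finset.le_max' _ _ hx⟩
  obtain ⟨ak, hakm, hakmin⟩ : ∃ a ∈ p.coeff.support, ∀ x ∈ p.coeff.support, a ≤ x :=
    ⟨_, p.coeff.support.min'_mem hpne, fun x hx => Finset.min'_le _ _ hx⟩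
  obtain ⟨b0, hb0m, hb0max⟩ : ∃ b ∈ q.coeff.support, ∀ x ∈ q.coeff.support, x ≤ b :=
    ⟨_, q.coeff.support.max'_mem hqne, fun x hx => Finset.le_max' _ _ hx⟩
  obtain ⟨bl, hblm, hblmin⟩ : ∃ b ∈ q.coeff.support, ∀ x ∈ q.coeff.support, b ≤ x :=
    ⟨_, q.coeff.support.min'_mem hqne, fun x hx => Finset.min'_le _ _ hx⟩
  have haa : ak < a0 := by
    obtain ⟨x, hx, y, hy, hxy⟩ := Finset.one_lt_card.mp hp2
    rcases lt_or_eq_of_le (le_trans (hakmin x hx) (ha0max x hx)) with h | h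
    · exact h
    · exact absurd (le_antisymm (le_trans (ha0max x hx) (h ▸ hakmin y hy))
        (le_trans (ha0max y hy) (h ▸ hakmin x hx))) hxy
  have hbb : bl < b0 := by
    obtain ⟨x, hx, y, hy, hxy⟩ := Finset.one_lt_card.mp hq2
    rcases lt_or_eq_of_le (le_trans (hblmin x hx) (hb0max x hx)) with h | h
    · exact h
    · exact absurd (le_antisymm (le_trans (hb0max x hx) (h ▸ hblmin y hy))
        (le_trans (hb0max y hy) (h ▸ hblmin x hx))) hxy
  have hmulapply : ∀ x, (p * q).coeff x
      = ∑ a ∈ p.coeff.support, ∑ b ∈ q.coeff.support, if a + b = x then p.coeff a * q.coeff b else 0 := by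
    intro x
    rw [AddMonoidAlgebra.coeff_mul]
    rfl
  have hsum_mem : ∀ a ∈ p.coeff.support, ∀ b ∈ q.coeff.support, (a + b) ∈ f.coeff.support := by
    intro a ha b hb
    rw [Finsupp.mem_support_iff, hpq, hmulapply]
    intro h0
    have h1 := addReduced_sum_eq_zero hred h0 a ha
    have h2 := addReduced_sum_eq_zero hred h1 b hb
    rw [if_pos rfl] at h2
    exact hmul _ _ (Finsupp.mem_support_iff.mp ha) (Finsupp.mem_support_iff.mp hb) h2
  have hmem_sum : ∀ x ∈ f.coeff.support, ∃ a ∈ p.coeff.support, ∃ b ∈ q.coeff.support, a + b = x := by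
    intro x hx
    have hx0 : (p * q).coeff x ≠ 0 := by
      rw [← hpq]
      exact Finsupp.mem_support_iff.mp hx
    rw [hmulapply] at hx0
    obtain ⟨a, ha, h1⟩ := Finset.exists_ne_zero_of_sum_ne_zero hx0
    obtain ⟨b, hb, h2⟩ := Finset.exists_ne_zero_of_sum_ne_zero h1
    refine ⟨a, ha, b, hb, ?_⟩
    by_contra hne
    rw [if_neg hne] at h2
    exact h2 rfl
  have hmax : ∀ x ∈ f.coeff.support, x ≤ g i0 := by
    intro x hx
    obtain ⟨j, rfl⟩ := (hsupp x).mp hx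
    exact hg.antitone (by rw [hi0, Fin.le_def]; exact Nat.zero_le _)
  have hmin : ∀ x ∈ f.coeff.support, g iN ≤ x := by
    intro x hx
    obtain ⟨j, rfl⟩ := (hsupp x).mp hx
    apply hg.antitone
    rw [hiN, Fin.le_def]
    exact Nat.lt_succ_iff.mp j.isLt
  have hA : g i0 = a0 + b0 := by
    apply le_antisymm
    · obtain ⟨a, ha, b, hb, hab⟩ := hmem_sum _ ((hsupp _).mpr ⟨i0, rfl⟩)
      rw [← hab]
      exact add_le_add (ha0max _ ha) (hb0max _ hb)
    · exact hmax _ (hsum_mem _ ha0m _ hb0m)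
  have hB : g iN = ak + bl := by
    apply le_antisymm
    · exact hmin _ (hsum_mem _ hakm _ hblm)
    · obtain ⟨a, ha, b, hb, hab⟩ := hmem_sum _ ((hsupp _).mpr ⟨iN, rfl⟩)
      rw [← hab]
      exact add_le_add (hakmin _ ha) (hblmin _ hb)
  have hsecond : ∀ x ∈ f.coeff.support, x < g i0 → x ≤ g i1 := by
    intro x hx hlt
    obtain ⟨j, rfl⟩ := (hsupp x).mp hx
    have hj : j ≠ i0 := by
      rintro rfl
      exact lt_irrefl _ hlt
    have hj' : (j : ℕ) ≠ 0 := fun h => hj (Fin.ext (by rw [h, hi0]))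
    apply hg.antitone
    rw [hi1, Fin.le_def]
    show 1 ≤ (j : ℕ)
    omega
  have h1a : ak + b0 ≤ g i1 := by
    apply hsecond _ (hsum_mem _ hakm _ hb0m)
    rw [hA]
    exact add_lt_add_left haa _
  have h1b : a0 + bl ≤ g i1 := by
    apply hsecond _ (hsum_mem _ ha0m _ hblm)
    rw [hA]
    exact add_lt_add_right hbb _
  have hsum2 : (ak + b0) + (a0 + bl) = g i0 + g iN := by
    rw [hA, hB]
    abel
  have h2 : g i1 + g i1 ≤ (ak + b0) + (a0 + bl) := by
    rw [hsum2, ← two_nsmul]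
    exact hgap
  have hE : (ak + b0) + (a0 + bl) = g i1 + g i1 :=
    le_antisymm (add_le_add h1a h1b) h2
  have hK1 : ak + b0 = g i1 := by
    by_contra hne
    have hlt := add_lt_add_of_lt_of_le (lt_of_le_of_ne h1a hne) h1b
    rw [hE] at hlt
    exact lt_irrefl _ hlt
  have hK2 : a0 + bl = g i1 := by
    by_contra hne
    have hlt := add_lt_add_of_le_of_lt h1a (lt_of_le_of_ne h1b hne)
    rw [hE] at hlt
    exact lt_irrefl _ hlt
  have hpsub : ∀ a ∈ p.coeff.support, a = ak ∨ a = a0 := by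
    intro a ha
    rcases eq_or_lt_of_le (ha0max _ ha) with h | h
    · right; exact h
    · left
      have hx : a + b0 ≤ g i1 := by
        apply hsecond _ (hsum_mem _ ha _ hb0m)
        rw [hA]
        exact add_lt_add_left h _
      rw [← hK1] at hx
      exact le_antisymm (le_of_add_le_add_right hx) (hakmin _ ha)
  have hqsub : ∀ b ∈ q.coeff.support, b = bl ∨ b = b0 := by
    intro b hb
    rcases eq_or_lt_of_le (hb0max _ hb) with h | h
    · right; exact h
    · left
      have hx : a0 + b ≤ g i1 := by
        apply hsecond _ (hsum_mem _ ha0m _ hb)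
        rw [hA]
        exact add_lt_add_right h _
      rw [← hK2] at hx
      exact le_antisymm (le_of_add_le_add_left hx) (hblmin _ hb)
  have h10 : g i1 < g i0 := hg (by rw [hi0, hi1, Fin.mk_lt_mk]; omega)
  have h21 : g i2 < g i1 := hg (by rw [hi1, hi2, Fin.mk_lt_mk]; omega)
  have h2N : g iN < g i2 := hg (by rw [hi2, hiN, Fin.mk_lt_mk]; omega)
  obtain ⟨a, ha, b, hb, hab⟩ := hmem_sum _ ((hsupp _).mpr ⟨i2, rfl⟩)
  rcases hpsub a ha with rfl | rfl <;> rcases hqsub b hb with rfl | rfl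
  · rw [← hB] at hab
    exact (ne_of_lt h2N) hab
  · rw [hK1] at hab
    exact (ne_of_gt h21) hab
  · rw [hK2] at hab
    exact (ne_of_gt h21) hab
  · rw [← hA] at hab
    exact (ne_of_gt (h21.trans h10)) hab
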